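/- Let c > 1/2 be a real number and let v : ℕ → ℝ satisfy c ≤ v_i ≤ 1 for all i. Then the quotient (∏_{i<n} v_i) / (∏_{i<n} v_i + ∏_{i<n} (1 − v_i)) tends to 1 as n → ∞; that is, if all of n agreeing witnesses have chances of verity exceeding a fixed bound above 1/2, the probability of the truth of their common testimony approaches certainty as n increases. -/

import Mathlib

theorem stmt_19 (c : ℝ) (hc : 1 / 2 < c) (v : ℕ → ℝ)
    (hv : ∀ i, c ≤ v i ∧ v i ≤ 1) :
    Filter.Tendsto (fun n : ℕ =>
        (∏ i ∈ Finset.range n, v i) /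
          ((∏ i ∈ Finset.range n, v i) + ∏ i ∈ Finset.range n, (1 - v i)))
      Filter.atTop (nhds 1) := by
  have hc0 : (0:ℝ) < c := lt_trans (by norm_num) hc
  have hc1 : c ≤ 1 := le_trans (hv 0).1 (hv 0).2
  set r := (1 - c) / c with hr
  have hr0 : 0 ≤ r := div_nonneg (by linarith) hc0.le
  have hr1 : r < 1 := (div_lt_one hc0).2 (by linarith)
  have hP : ∀ n, 0 < ∏ i ∈ Finset.range n, v i := fun n =>
    Finset.prod_pos (fun i _ => lt_of_lt_of_le hc0 (hv i).1)
  have hQ : ∀ n, 0 ≤ ∏ i ∈ Finset.range n, (1 - v i) := fun n =>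
    Finset.prod_nonneg (fun i _ => by linarith [(hv i).2])
  have key : ∀ n, ∏ i ∈ Finset.range n, (1 - v i) ≤ r ^ n * ∏ i ∈ Finset.range n, v i := by
    intro n
    have hre : r ^ n * ∏ i ∈ Finset.range n, v i = ∏ i ∈ Finset.range n, (r * v i) := by
      rw [Finset.prod_mul_distrib, Finset.prod_const, Finset.card_range]
    rw [hre]
    apply Finset.prod_le_prod (fun i _ => by linarith [(hv i).2])
    intro i _
    rw [hr, div_mul_eq_mul_div, le_div_iff₀ hc0]
    have h1 := (hv i).1; have h2 := (hv i).2
    nlinarith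
  apply tendsto_of_tendsto_of_tendsto_of_le_of_le
    (g := fun n : ℕ => 1 - r ^ n) (h := fun _ : ℕ => (1:ℝ))
  · have h0 : Filter.Tendsto (fun n : ℕ => r ^ n) Filter.atTop (nhds 0) :=
      tendsto_pow_atTop_nhds_zero_of_lt_one hr0 hr1
    have := (tendsto_const_nhds (x := (1:ℝ)) (f := Filter.atTop)).sub h0
    simpa using this
  · exact tendsto_const_nhds
  · intro n
    dsimp only
    have hPn := hP n; have hQn := hQ n
    have hk := key n
    have hrn : 0 ≤ r ^ n := pow_nonneg hr0 n
    have hrq : 0 ≤ r ^ n * ∏ i ∈ Finset.range n, (1 - v i) := mul_nonneg hrn hQn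
    rw [le_div_iff₀ (by linarith)]
    nlinarith
  · intro n
    exact div_le_one_of_le₀ (by linarith [hQ n]) (by linarith [hP n, hQ n])
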